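/- arXiv:1711.09970 — 3 statements merged into one kernel-verified Lean document; each statement's English description precedes it below -/
import Mathlib

section
/- Let u, v be C² functions on an open set of ℝ² and x₀ ∈ ℝ². Then Δu (∇v · (x − x₀)) + Δv (∇u · (x − x₀)) = div(∇u (∇v · (x − x₀)) + ∇v (∇u · (x − x₀)) − (∇u · ∇v)(x − x₀)). -/
/-- First partial derivative of `f : ℝ² → ℝ`. -/
noncomputable def pd1 (f : ℝ × ℝ → ℝ) (x : ℝ × ℝ) : ℝ := fderiv ℝ f x (1, 0)

/-- Second partial derivative of `f : ℝ² → ℝ`. -/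
noncomputable def pd2 (f : ℝ × ℝ → ℝ) (x : ℝ × ℝ) : ℝ := fderiv ℝ f x (0, 1)

/-- Gradient of `f : ℝ² → ℝ`. -/
noncomputable def grad (f : ℝ × ℝ → ℝ) (x : ℝ × ℝ) : ℝ × ℝ := (pd1 f x, pd2 f x)

/-- Divergence of a vector field on `ℝ²`. -/
noncomputable def divg (F : ℝ × ℝ → ℝ × ℝ) (x : ℝ × ℝ) : ℝ :=
  pd1 (fun y => (F y).1) x + pd2 (fun y => (F y).2) x

/-- Laplacian of `f : ℝ² → ℝ`. -/
noncomputable def lap (f : ℝ × ℝ → ℝ) (x : ℝ × ℝ) : ℝ := divg (grad f) x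

/-- Euclidean dot product on `ℝ²`. -/
def dot (a b : ℝ × ℝ) : ℝ := a.1 * b.1 + a.2 * b.2

/-- Pohozaev-type divergence identity:
`Δu (∇v·(x−x₀)) + Δv (∇u·(x−x₀)) = div(∇u(∇v·(x−x₀)) + ∇v(∇u·(x−x₀)) − (∇u·∇v)(x−x₀))`. -/
theorem stmt_7 (U : Set (ℝ × ℝ)) (hU : IsOpen U) (u v : ℝ × ℝ → ℝ)
    (hu : ContDiffOn ℝ 2 u U) (hv : ContDiffOn ℝ 2 v U) (x₀ : ℝ × ℝ)
    (x : ℝ × ℝ) (hx : x ∈ U) :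
    lap u x * dot (grad v x) (x - x₀) + lap v x * dot (grad u x) (x - x₀)
      = divg (fun y =>
          dot (grad v y) (y - x₀) • grad u y + dot (grad u y) (y - x₀) • grad v y
            - dot (grad u y) (grad v y) • (y - x₀)) x := by
  have hUx : U ∈ nhds x := hU.mem_nhds hx
  have hu2 : ContDiffAt ℝ 2 u x := hu.contDiffAt hUx
  have hv2 : ContDiffAt ℝ 2 v x := hv.contDiffAt hUx
  have hU'' : HasFDerivAt (fderiv ℝ u) (fderiv ℝ (fderiv ℝ u) x) x :=
    ((hu2.fderiv_right (m := 1) (by norm_num)).differentiableAt one_ne_zero).hasFDerivAt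
  have hV'' : HasFDerivAt (fderiv ℝ v) (fderiv ℝ (fderiv ℝ v) x) x :=
    ((hv2.fderiv_right (m := 1) (by norm_num)).differentiableAt one_ne_zero).hasFDerivAt
  have ha : HasFDerivAt (fun y => (fderiv ℝ u y) ((1:ℝ), (0:ℝ)))
      ((ContinuousLinearMap.apply ℝ ℝ ((1:ℝ), (0:ℝ))).comp (fderiv ℝ (fderiv ℝ u) x)) x :=
    (ContinuousLinearMap.apply ℝ ℝ ((1:ℝ), (0:ℝ))).hasFDerivAt.comp x hU''
  have hb : HasFDerivAt (fun y => (fderiv ℝ u y) ((0:ℝ), (1:ℝ)))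
      ((ContinuousLinearMap.apply ℝ ℝ ((0:ℝ), (1:ℝ))).comp (fderiv ℝ (fderiv ℝ u) x)) x :=
    (ContinuousLinearMap.apply ℝ ℝ ((0:ℝ), (1:ℝ))).hasFDerivAt.comp x hU''
  have hc : HasFDerivAt (fun y => (fderiv ℝ v y) ((1:ℝ), (0:ℝ)))
      ((ContinuousLinearMap.apply ℝ ℝ ((1:ℝ), (0:ℝ))).comp (fderiv ℝ (fderiv ℝ v) x)) x :=
    (ContinuousLinearMap.apply ℝ ℝ ((1:ℝ), (0:ℝ))).hasFDerivAt.comp x hV''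
  have hd : HasFDerivAt (fun y => (fderiv ℝ v y) ((0:ℝ), (1:ℝ)))
      ((ContinuousLinearMap.apply ℝ ℝ ((0:ℝ), (1:ℝ))).comp (fderiv ℝ (fderiv ℝ v) x)) x :=
    (ContinuousLinearMap.apply ℝ ℝ ((0:ℝ), (1:ℝ))).hasFDerivAt.comp x hV''
  have hw1 : HasFDerivAt (fun y : ℝ × ℝ => y.1 - x₀.1) (ContinuousLinearMap.fst ℝ ℝ ℝ) x :=
    hasFDerivAt_fst.sub_const _
  have hw2 : HasFDerivAt (fun y : ℝ × ℝ => y.2 - x₀.2) (ContinuousLinearMap.snd ℝ ℝ ℝ) x :=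
    hasFDerivAt_snd.sub_const _
  have hF1 := ((((hc.mul hw1).add (hd.mul hw2)).mul ha).add
      (((ha.mul hw1).add (hb.mul hw2)).mul hc)).sub (((ha.mul hc).add (hb.mul hd)).mul hw1)
  have hF2 := ((((hc.mul hw1).add (hd.mul hw2)).mul hb).add
      (((ha.mul hw1).add (hb.mul hw2)).mul hd)).sub (((ha.mul hc).add (hb.mul hd)).mul hw2)
  have hsu := hu2.isSymmSndFDerivAt (by norm_num) ((1:ℝ), (0:ℝ)) ((0:ℝ), (1:ℝ))
  have hsv := hv2.isSymmSndFDerivAt (by norm_num) ((1:ℝ), (0:ℝ)) ((0:ℝ), (1:ℝ))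
  simp only [lap, divg, grad, dot, Prod.fst_add, Prod.snd_add, Prod.fst_sub, Prod.snd_sub,
    Prod.smul_fst, Prod.smul_snd, smul_eq_mul, pd1, pd2]
  simp only [Pi.mul_def, Pi.add_def, Pi.sub_def] at hF1 hF2
  rw [hF1.fderiv, hF2.fderiv, ha.fderiv, hb.fderiv, hc.fderiv, hd.fderiv]
  simp only [ContinuousLinearMap.add_apply, ContinuousLinearMap.sub_apply,
    ContinuousLinearMap.smul_apply, ContinuousLinearMap.comp_apply,
    ContinuousLinearMap.apply_apply, ContinuousLinearMap.coe_fst', ContinuousLinearMap.coe_snd',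
    smul_eq_mul]
  rw [hsu, hsv]
  ring
end

section
/- Suppose ζ and v are C² functions on an open set U ⊂ ℝ² satisfying Δζ + f ζ = 0 and Δv + f = 0 for some continuous function f of the form f = λ e^{v + φ + log h} with φ, log h ∈ C¹(U), λ > 0. Then for x₀ ∈ ℝ², div(∇ζ(∇v·(x−x₀)) + ∇v(∇ζ·(x−x₀)) − (∇ζ·∇v)(x−x₀)) = −div(f ζ (x−x₀)) + 2 f ζ + f ζ (∇(φ + log h)·(x−x₀)) on U. -/
section Aux
variable {f g : ℝ × ℝ → ℝ} {x w : ℝ × ℝ}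

private lemma pdw_add (hf : DifferentiableAt ℝ f x) (hg : DifferentiableAt ℝ g x) :
    fderiv ℝ (fun y => f y + g y) x w = fderiv ℝ f x w + fderiv ℝ g x w := by
  rw [fderiv_fun_add hf hg]; rfl

private lemma pdw_sub (hf : DifferentiableAt ℝ f x) (hg : DifferentiableAt ℝ g x) :
    fderiv ℝ (fun y => f y - g y) x w = fderiv ℝ f x w - fderiv ℝ g x w := by
  rw [fderiv_fun_sub hf hg]; rfl

private lemma pdw_mul (hf : DifferentiableAt ℝ f x) (hg : DifferentiableAt ℝ g x) :
    fderiv ℝ (fun y => f y * g y) x w = fderiv ℝ f x w * g x + f x * fderiv ℝ g x w := by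
  rw [fderiv_fun_mul hf hg]
  simp [ContinuousLinearMap.add_apply]
  ring

private lemma pdw_fst' : fderiv ℝ (Prod.fst : ℝ × ℝ → ℝ) x w = w.1 := by
  rw [hasFDerivAt_fst.fderiv]; rfl

private lemma pdw_snd' : fderiv ℝ (Prod.snd : ℝ × ℝ → ℝ) x w = w.2 := by
  rw [hasFDerivAt_snd.fderiv]; rfl

private lemma pdw_const {c : ℝ} : fderiv ℝ (fun _ : ℝ × ℝ => c) x w = 0 := by
  simp

private lemma pdw_fst_sub {c : ℝ} :
    fderiv ℝ (fun y : ℝ × ℝ => y.1 - c) x w = w.1 := by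
  have h : HasFDerivAt (fun y : ℝ × ℝ => y.1 - c) (ContinuousLinearMap.fst ℝ ℝ ℝ) x :=
    hasFDerivAt_fst.sub_const c
  rw [h.fderiv]; rfl

private lemma pdw_snd_sub {c : ℝ} :
    fderiv ℝ (fun y : ℝ × ℝ => y.2 - c) x w = w.2 := by
  have h : HasFDerivAt (fun y : ℝ × ℝ => y.2 - c) (ContinuousLinearMap.snd ℝ ℝ ℝ) x :=
    hasFDerivAt_snd.sub_const c
  rw [h.fderiv]; rfl

private lemma pdw_pd (hf : ContDiffAt ℝ 2 f x) (w w' : ℝ × ℝ) :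
    fderiv ℝ (fun y => fderiv ℝ f y w) x w' = fderiv ℝ (fderiv ℝ f) x w' w := by
  have hdf : DifferentiableAt ℝ (fderiv ℝ f) x :=
    (hf.fderiv_right (m := 1) (by norm_num)).differentiableAt one_ne_zero
  rw [fderiv_clm_apply hdf (differentiableAt_const w)]
  simp

private lemma pd_symm (hf : ContDiffAt ℝ 2 f x) (w w' : ℝ × ℝ) :
    fderiv ℝ (fun y => fderiv ℝ f y w) x w' = fderiv ℝ (fun y => fderiv ℝ f y w') x w := by
  rw [pdw_pd hf, pdw_pd hf, hf.isSymmSndFDerivAt (by simp)]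

end Aux

/-- The divergence computation \eqref{4.4}: if `Δζ + fζ = 0` and `Δv + f = 0` with
`f = λ e^{v + φ + log h}`, then
`div(∇ζ(∇v·(x−x₀)) + ∇v(∇ζ·(x−x₀)) − (∇ζ·∇v)(x−x₀))
  = −div(fζ(x−x₀)) + 2fζ + fζ(∇(φ + log h)·(x−x₀))`. -/
theorem stmt_9 (U : Set (ℝ × ℝ)) (hU : IsOpen U) (ζ v φ logh : ℝ × ℝ → ℝ)
    (hζ : ContDiffOn ℝ 2 ζ U) (hv : ContDiffOn ℝ 2 v U)
    (hφ : ContDiffOn ℝ 1 φ U) (hlogh : ContDiffOn ℝ 1 logh U)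
    (lam : ℝ) (hlam : 0 < lam)
    (f : ℝ × ℝ → ℝ) (hf : ∀ y ∈ U, f y = lam * Real.exp (v y + φ y + logh y))
    (heqζ : ∀ y ∈ U, lap ζ y + f y * ζ y = 0)
    (heqv : ∀ y ∈ U, lap v y + f y = 0)
    (x₀ : ℝ × ℝ) (x : ℝ × ℝ) (hx : x ∈ U) :
    divg (fun y =>
        dot (grad v y) (y - x₀) • grad ζ y + dot (grad ζ y) (y - x₀) • grad v y
          - dot (grad ζ y) (grad v y) • (y - x₀)) x
      = -divg (fun y => (f y * ζ y) • (y - x₀)) x + 2 * f x * ζ x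
          + f x * ζ x * dot (grad (fun y => φ y + logh y) x) (x - x₀) := by
  have hmem : U ∈ nhds x := hU.mem_nhds hx
  have cζ : ContDiffAt ℝ 2 ζ x := hζ.contDiffAt hmem
  have cv : ContDiffAt ℝ 2 v x := hv.contDiffAt hmem
  have hζd : DifferentiableAt ℝ ζ x := cζ.differentiableAt (by norm_num)
  have hvd : DifferentiableAt ℝ v x := cv.differentiableAt (by norm_num)
  have hφd : DifferentiableAt ℝ φ x := (hφ.contDiffAt hmem).differentiableAt one_ne_zero
  have hloghd : DifferentiableAt ℝ logh x := (hlogh.contDiffAt hmem).differentiableAt one_ne_zero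
  have hdζ' : DifferentiableAt ℝ (fderiv ℝ ζ) x :=
    (cζ.fderiv_right (m := 1) (by norm_num)).differentiableAt one_ne_zero
  have hdv' : DifferentiableAt ℝ (fderiv ℝ v) x :=
    (cv.fderiv_right (m := 1) (by norm_num)).differentiableAt one_ne_zero
  have hdζ1 : DifferentiableAt ℝ (fun y => fderiv ℝ ζ y ((1:ℝ), (0:ℝ))) x :=
    hdζ'.clm_apply (differentiableAt_const _)
  have hdζ2 : DifferentiableAt ℝ (fun y => fderiv ℝ ζ y ((0:ℝ), (1:ℝ))) x :=
    hdζ'.clm_apply (differentiableAt_const _)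
  have hdv1 : DifferentiableAt ℝ (fun y => fderiv ℝ v y ((1:ℝ), (0:ℝ))) x :=
    hdv'.clm_apply (differentiableAt_const _)
  have hdv2 : DifferentiableAt ℝ (fun y => fderiv ℝ v y ((0:ℝ), (1:ℝ))) x :=
    hdv'.clm_apply (differentiableAt_const _)
  -- the function f
  set g : ℝ × ℝ → ℝ := fun y => lam * Real.exp (v y + φ y + logh y) with hg_def
  have hev : f =ᶠ[nhds x] g := by
    filter_upwards [hmem] with y hy using hf y hy
  have hgd : HasFDerivAt g
      (lam • (Real.exp (v x + φ x + logh x) •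
        (fderiv ℝ v x + fderiv ℝ φ x + fderiv ℝ logh x))) x := by
    have hsum : HasFDerivAt (fun y => v y + φ y + logh y)
        (fderiv ℝ v x + fderiv ℝ φ x + fderiv ℝ logh x) x :=
      (hvd.hasFDerivAt.add hφd.hasFDerivAt).add hloghd.hasFDerivAt
    exact hsum.exp.const_mul lam
  have hfd : DifferentiableAt ℝ f x :=
    hgd.differentiableAt.congr_of_eventuallyEq hev
  have hpdf : ∀ w : ℝ × ℝ, fderiv ℝ f x w
      = f x * (fderiv ℝ v x w + fderiv ℝ φ x w + fderiv ℝ logh x w) := by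
    intro w
    rw [hev.fderiv_eq, hgd.fderiv]
    simp [hf x hx, hg_def]
    ring
  -- Laplacian equations at x
  have hlapζ : fderiv ℝ (fun y => fderiv ℝ ζ y ((1:ℝ), (0:ℝ))) x ((1:ℝ), (0:ℝ))
      + fderiv ℝ (fun y => fderiv ℝ ζ y ((0:ℝ), (1:ℝ))) x ((0:ℝ), (1:ℝ)) + f x * ζ x = 0 := by
    have := heqζ x hx
    simpa [lap, divg, grad, pd1, pd2] using this
  have hlapv : fderiv ℝ (fun y => fderiv ℝ v y ((1:ℝ), (0:ℝ))) x ((1:ℝ), (0:ℝ))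
      + fderiv ℝ (fun y => fderiv ℝ v y ((0:ℝ), (1:ℝ))) x ((0:ℝ), (1:ℝ)) + f x = 0 := by
    have := heqv x hx
    simpa [lap, divg, grad, pd1, pd2] using this
  -- Schwarz symmetry
  have hswζ : fderiv ℝ (fun y => fderiv ℝ ζ y ((0:ℝ), (1:ℝ))) x ((1:ℝ), (0:ℝ))
      = fderiv ℝ (fun y => fderiv ℝ ζ y ((1:ℝ), (0:ℝ))) x ((0:ℝ), (1:ℝ)) := pd_symm cζ _ _
  have hswv : fderiv ℝ (fun y => fderiv ℝ v y ((0:ℝ), (1:ℝ))) x ((1:ℝ), (0:ℝ))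
      = fderiv ℝ (fun y => fderiv ℝ v y ((1:ℝ), (0:ℝ))) x ((0:ℝ), (1:ℝ)) := pd_symm cv _ _
  simp only [divg, grad, dot, pd1, pd2, Prod.fst_add, Prod.snd_add, Prod.fst_sub, Prod.snd_sub,
    Prod.smul_fst, Prod.smul_snd, smul_eq_mul]
  simp (disch := first | assumption | fun_prop) only
    [pdw_add, pdw_sub, pdw_mul, pdw_fst_sub, pdw_snd_sub, pdw_fst', pdw_snd', pdw_const]
  rw [hswζ, hswv]
  simp only [hpdf]
  linear_combination
    (fderiv ℝ v x ((1:ℝ), (0:ℝ)) * (x.1 - x₀.1) + fderiv ℝ v x ((0:ℝ), (1:ℝ)) * (x.2 - x₀.2)) * hlapζ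
    + (fderiv ℝ ζ x ((1:ℝ), (0:ℝ)) * (x.1 - x₀.1) + fderiv ℝ ζ x ((0:ℝ), (1:ℝ)) * (x.2 - x₀.2)) * hlapv
end

section
/- Let G be harmonic in an annulus B_r(x₀) ∖ B_θ(x₀) ⊂ ℝ². Then for i ∈ {1,2}, the flux-type integral ∫_{∂B_r(x₀)} (D_i G)/|x − x₀| dσ equals ∫_{∂B_θ(x₀)} (D_i G)/|x − x₀| dσ. -/
open Real Set Metric intervalIntegral MeasureTheory

/-- A linear functional on `ℝ²` is determined by its values on the basis. -/
lemma clm_expand (L : (ℝ × ℝ) →L[ℝ] ℝ) (a b : ℝ) :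
    L (a, b) = a * L (1, 0) + b * L (0, 1) := by
  have h : (a, b) = a • ((1:ℝ), (0:ℝ)) + b • ((0:ℝ), (1:ℝ)) := by
    simp [Prod.ext_iff]
  rw [h, map_add, L.map_smul, L.map_smul, smul_eq_mul, smul_eq_mul]

lemma circle_avg_const (x₀ : ℝ × ℝ) {U : Set (ℝ × ℝ)} (hU : IsOpen U)
    (h p : ℝ × ℝ → ℝ) (hh : ContDiffOn ℝ 1 h U) (hp : ContDiffOn ℝ 1 p U)
    (hrel1 : ∀ x ∈ U, fderiv ℝ h x (1, 0) = fderiv ℝ p x (0, 1))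
    (hrel2 : ∀ x ∈ U, fderiv ℝ h x (0, 1) = - fderiv ℝ p x (1, 0))
    {θ r : ℝ} (hθ : 0 < θ) (hθr : θ < r)
    (hmem : ∀ ρ ∈ Set.Icc θ r, ∀ t : ℝ, x₀ + (ρ * Real.cos t, ρ * Real.sin t) ∈ U) :
    (∫ t in (0:ℝ)..(2 * Real.pi), h (x₀ + (r * Real.cos t, r * Real.sin t)))
      = ∫ t in (0:ℝ)..(2 * Real.pi), h (x₀ + (θ * Real.cos t, θ * Real.sin t)) := by
  have hpi : (0:ℝ) ≤ 2 * Real.pi := by positivity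
  set γ : ℝ → ℝ → ℝ × ℝ := fun ρ t => x₀ + (ρ * Real.cos t, ρ * Real.sin t) with hγ
  set F : ℝ → ℝ := fun ρ => ∫ t in (0:ℝ)..(2 * Real.pi), h (γ ρ t) with hF
  have hhd : DifferentiableOn ℝ h U := hh.differentiableOn one_ne_zero
  have hpd : DifferentiableOn ℝ p U := hp.differentiableOn one_ne_zero
  have hcont : ContinuousOn (fderiv ℝ h) U := hh.continuousOn_fderiv_of_isOpen hU le_rfl
  have huIoc : Set.uIoc (0:ℝ) (2 * Real.pi) ⊆ Set.Icc 0 (2 * Real.pi) := by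
    rw [Set.uIoc_of_le hpi]; exact Set.Ioc_subset_Icc_self
  have huIcc : Set.uIcc (0:ℝ) (2 * Real.pi) = Set.Icc 0 (2 * Real.pi) := Set.uIcc_of_le hpi
  have hγcont : ∀ x : ℝ, Continuous (fun t => γ x t) := by
    intro x; apply Continuous.add continuous_const; fun_prop
  -- derivative of F is zero on [θ, r]
  have key : ∀ ρ ∈ Set.Icc θ r, HasDerivAt F 0 ρ := by
    intro ρ hρ
    have hρ0 : 0 < ρ := lt_of_lt_of_le hθ hρ.1
    -- compact circle and thickening
    have hK : IsCompact ((fun t => γ ρ t) '' Set.Icc 0 (2 * Real.pi)) :=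
      isCompact_Icc.image (hγcont ρ)
    have hKU : (fun t => γ ρ t) '' Set.Icc 0 (2 * Real.pi) ⊆ U := by
      rintro _ ⟨t, -, rfl⟩; exact hmem ρ hρ t
    obtain ⟨ε, εpos, hεU⟩ := hK.exists_cthickening_subset_open hU hKU
    set K' := Metric.cthickening ε ((fun t => γ ρ t) '' Set.Icc 0 (2 * Real.pi)) with hK'
    have hK'c : IsCompact K' := hK.cthickening
    obtain ⟨M, hM⟩ := hK'c.exists_bound_of_continuousOn (hcont.mono hεU)
    -- points of nearby circles lie in K'
    have hmem' : ∀ x ∈ Metric.ball ρ ε, ∀ t ∈ Set.Icc (0:ℝ) (2 * Real.pi), γ x t ∈ K' := by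
      intro x hx t ht
      apply Metric.mem_cthickening_of_dist_le (γ x t) (γ ρ t) ε
        ((fun t => γ ρ t) '' Set.Icc 0 (2 * Real.pi)) ⟨t, ht, rfl⟩
      have hd : dist (γ x t) (γ ρ t) = dist ((x * Real.cos t, x * Real.sin t) : ℝ × ℝ)
          ((ρ * Real.cos t, ρ * Real.sin t) : ℝ × ℝ) := by
        simp [hγ, dist_add_left]
      rw [hd, Prod.dist_eq]
      have h1 : dist (x * Real.cos t) (ρ * Real.cos t) ≤ ε := by
        rw [Real.dist_eq, ← sub_mul, abs_mul]
        calc |x - ρ| * |Real.cos t| ≤ |x - ρ| * 1 :=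
              mul_le_mul_of_nonneg_left (Real.abs_cos_le_one t) (abs_nonneg _)
          _ = |x - ρ| := mul_one _
          _ ≤ ε := le_of_lt (by simpa [Real.dist_eq] using hx)
      have h2 : dist (x * Real.sin t) (ρ * Real.sin t) ≤ ε := by
        rw [Real.dist_eq, ← sub_mul, abs_mul]
        calc |x - ρ| * |Real.sin t| ≤ |x - ρ| * 1 :=
              mul_le_mul_of_nonneg_left (Real.abs_sin_le_one t) (abs_nonneg _)
          _ = |x - ρ| := mul_one _
          _ ≤ ε := le_of_lt (by simpa [Real.dist_eq] using hx)
      exact max_le h1 h2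
    have hK'U : K' ⊆ U := hεU
    -- continuity of the integrand family
    have hFcont : ∀ x ∈ Metric.ball ρ ε, ContinuousOn (fun t => h (γ x t))
        (Set.Icc 0 (2 * Real.pi)) := by
      intro x hx
      exact (hh.continuousOn).comp ((hγcont x).continuousOn)
        (fun t ht => hK'U (hmem' x hx t ht))
    have hF'cont : ContinuousOn
        (fun t => (fderiv ℝ h (γ ρ t)) (Real.cos t, Real.sin t))
        (Set.Icc 0 (2 * Real.pi)) := by
      apply ContinuousOn.clm_apply
      · exact hcont.comp ((hγcont ρ).continuousOn) (fun t _ => hmem ρ hρ t)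
      · fun_prop
    have hmes : ∀ᶠ x in nhds ρ, AEStronglyMeasurable (fun t => h (γ x t))
        (MeasureTheory.volume.restrict (Set.uIoc (0:ℝ) (2 * Real.pi))) := by
      filter_upwards [Metric.ball_mem_nhds ρ εpos] with x hx
      exact ContinuousOn.aestronglyMeasurable ((hFcont x hx).mono huIoc) measurableSet_uIoc
    have hbound : ∀ᵐ t ∂MeasureTheory.volume, t ∈ Set.uIoc (0:ℝ) (2 * Real.pi) →
        ∀ x ∈ Metric.ball ρ ε,
          ‖(fderiv ℝ h (γ x t)) (Real.cos t, Real.sin t)‖ ≤ M := by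
      apply Filter.Eventually.of_forall
      intro t ht x hx
      have hyK : γ x t ∈ K' := hmem' x hx t (huIoc ht)
      calc ‖(fderiv ℝ h (γ x t)) (Real.cos t, Real.sin t)‖
          ≤ ‖fderiv ℝ h (γ x t)‖ * ‖((Real.cos t, Real.sin t) : ℝ × ℝ)‖ :=
            ContinuousLinearMap.le_opNorm _ _
        _ ≤ M * 1 := by
            apply mul_le_mul (hM _ hyK) _ (norm_nonneg _)
              (le_trans (norm_nonneg _) (hM _ hyK))
            rw [Prod.norm_def]
            exact max_le (by simpa using Real.abs_cos_le_one t)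
              (by simpa using Real.abs_sin_le_one t)
        _ = M := mul_one M
    have hdiff : ∀ᵐ t ∂MeasureTheory.volume, t ∈ Set.uIoc (0:ℝ) (2 * Real.pi) →
        ∀ x ∈ Metric.ball ρ ε,
          HasDerivAt (fun x => h (γ x t))
            ((fderiv ℝ h (γ x t)) (Real.cos t, Real.sin t)) x := by
      apply Filter.Eventually.of_forall
      intro t ht x hx
      have hyU : γ x t ∈ U := hK'U (hmem' x hx t (huIoc ht))
      have hcurve : HasDerivAt (fun x : ℝ => γ x t) (Real.cos t, Real.sin t) x := by
        apply HasDerivAt.const_add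
        exact HasDerivAt.prodMk (hasDerivAt_mul_const (x := x) (Real.cos t)) (hasDerivAt_mul_const (x := x) (Real.sin t))
      exact ((hhd.differentiableAt (hU.mem_nhds hyU)).hasFDerivAt).comp_hasDerivAt x hcurve
    have hder := intervalIntegral.hasDerivAt_integral_of_dominated_loc_of_deriv_le
      (F := fun x t => h (γ x t))
      (F' := fun x t => (fderiv ℝ h (γ x t)) (Real.cos t, Real.sin t))
      (bound := fun _ => M) (Metric.ball_mem_nhds ρ εpos) hmes
      (((hFcont ρ (Metric.mem_ball_self εpos)).mono (by rw [huIcc])).intervalIntegrable)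
      (ContinuousOn.aestronglyMeasurable (hF'cont.mono huIoc) measurableSet_uIoc)
      hbound intervalIntegrable_const hdiff
    -- the derivative integral vanishes by the fundamental theorem of calculus
    have hzero : (∫ t in (0:ℝ)..(2 * Real.pi),
        (fderiv ℝ h (γ ρ t)) (Real.cos t, Real.sin t)) = 0 := by
      have hg : ∀ t ∈ Set.uIcc (0:ℝ) (2 * Real.pi),
          HasDerivAt (fun t => ρ⁻¹ * p (γ ρ t))
            ((fderiv ℝ h (γ ρ t)) (Real.cos t, Real.sin t)) t := by
        intro t ht
        have hyU : γ ρ t ∈ U := hmem ρ hρ t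
        have hcurve : HasDerivAt (fun t : ℝ => γ ρ t)
            (ρ * -Real.sin t, ρ * Real.cos t) t := by
          apply HasDerivAt.const_add
          exact HasDerivAt.prodMk ((Real.hasDerivAt_cos t).const_mul ρ)
            ((Real.hasDerivAt_sin t).const_mul ρ)
        have hcomp := (((hpd.differentiableAt
          (hU.mem_nhds hyU)).hasFDerivAt).comp_hasDerivAt t hcurve).const_mul ρ⁻¹
        have hval : ρ⁻¹ * (fderiv ℝ p (γ ρ t)) (ρ * -Real.sin t, ρ * Real.cos t)
            = (fderiv ℝ h (γ ρ t)) (Real.cos t, Real.sin t) := by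
          rw [clm_expand _ (ρ * -Real.sin t) (ρ * Real.cos t),
            clm_expand _ (Real.cos t) (Real.sin t), hrel1 _ hyU, hrel2 _ hyU]
          field_simp
          ring
        exact hval ▸ hcomp
      rw [intervalIntegral.integral_eq_sub_of_hasDerivAt hg
        ((hF'cont.mono (by rw [huIcc])).intervalIntegrable)]
      simp [hγ]
    rw [hzero] at hder
    exact hder.2
  -- mean value theorem: F is constant on [θ, r]
  have hFcont : ContinuousOn F (Set.Icc θ r) :=
    fun x hx => ((key x hx).continuousAt).continuousWithinAt
  obtain ⟨c, -, hc⟩ := exists_hasDerivAt_eq_slope F (fun _ => 0) hθr hFcont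
    (fun x hx => key x (Set.Ioo_subset_Icc_self hx))
  have : F r = F θ := by
    have hrθ : r - θ ≠ 0 := sub_ne_zero.2 (ne_of_gt hθr)
    field_simp at hc
    linarith
  exact this

/-- If `G` is harmonic in the annulus `B_r(x₀) ∖ B_θ(x₀) ⊂ ℝ²` then, for `i ∈ {1,2}`,
the flux-type integral `∫_{∂B_r(x₀)} D_i G/|x − x₀| dσ` over the circle of radius `r`
equals the corresponding integral over the circle of radius `θ`.  The circle integrals
are written via the parametrization `x = x₀ + ρ(cos t, sin t)`, `dσ = ρ dt`,
`|x − x₀| = ρ`. -/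
theorem stmt_18 (x₀ : ℝ × ℝ) (θ r : ℝ) (hθ : 0 < θ) (hθr : θ < r)
    (U : Set (ℝ × ℝ)) (hU : IsOpen U)
    (hA : {x : ℝ × ℝ | θ ≤ Real.sqrt ((x.1 - x₀.1)^2 + (x.2 - x₀.2)^2) ∧
            Real.sqrt ((x.1 - x₀.1)^2 + (x.2 - x₀.2)^2) ≤ r} ⊆ U)
    (G : ℝ × ℝ → ℝ) (hG : ContDiffOn ℝ 2 G U) (hharm : ∀ x ∈ U, lap G x = 0)
    (i : Fin 2) :
    ∫ t in (0:ℝ)..(2 * Real.pi),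
        (if i = 0 then pd1 G else pd2 G) (x₀ + (r * Real.cos t, r * Real.sin t)) / r * r
      = ∫ t in (0:ℝ)..(2 * Real.pi),
          (if i = 0 then pd1 G else pd2 G) (x₀ + (θ * Real.cos t, θ * Real.sin t)) / θ * θ := by
  have hr : (0:ℝ) < r := lt_trans hθ hθr
  have hG1 : ContDiffOn ℝ 1 (fun x => fderiv ℝ G x) U :=
    hG.fderiv_of_isOpen hU (by norm_num)
  have hC : ∀ w : ℝ × ℝ, ContDiffOn ℝ 1 (fun y => fderiv ℝ G y w) U :=
    fun w => hG1.clm_apply contDiffOn_const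
  -- derivatives of the partial derivatives in terms of the second derivative
  have hD : ∀ (w : ℝ × ℝ), ∀ x ∈ U, ∀ z : ℝ × ℝ,
      fderiv ℝ (fun y => fderiv ℝ G y w) x z = fderiv ℝ (fderiv ℝ G) x z w := by
    intro w x hx z
    have hx'' : HasFDerivAt (fderiv ℝ G) (fderiv ℝ (fderiv ℝ G) x) x :=
      ((hG1.differentiableOn one_ne_zero).differentiableAt (hU.mem_nhds hx)).hasFDerivAt
    have hcomp : HasFDerivAt (fun y => fderiv ℝ G y w)
        ((ContinuousLinearMap.apply ℝ ℝ w).comp (fderiv ℝ (fderiv ℝ G) x)) x :=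
      (ContinuousLinearMap.apply ℝ ℝ w).hasFDerivAt.comp x hx''
    rw [hcomp.fderiv]; rfl
  -- symmetry of the second derivative
  have hsymm : ∀ x ∈ U, ∀ a b : ℝ × ℝ,
      fderiv ℝ (fderiv ℝ G) x a b = fderiv ℝ (fderiv ℝ G) x b a := by
    intro x hx a b
    have hev : ∀ᶠ y in nhds x, HasFDerivAt G (fderiv ℝ G y) y := by
      filter_upwards [hU.mem_nhds hx] with y hy
      exact ((hG.differentiableOn two_ne_zero).differentiableAt (hU.mem_nhds hy)).hasFDerivAt
    exact second_derivative_symmetric_of_eventually hev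
      (((hG1.differentiableOn one_ne_zero).differentiableAt (hU.mem_nhds hx)).hasFDerivAt) a b
  -- harmonicity in terms of the second derivative
  have hharm' : ∀ x ∈ U, fderiv ℝ (fderiv ℝ G) x (1, 0) (1, 0)
      + fderiv ℝ (fderiv ℝ G) x (0, 1) (0, 1) = 0 := by
    intro x hx
    have h0 := hharm x hx
    simp only [lap, divg, grad, pd1, pd2] at h0
    rw [hD (1, 0) x hx (1, 0), hD (0, 1) x hx (0, 1)] at h0
    exact h0
  -- membership of all circles in U
  have hmem : ∀ ρ ∈ Set.Icc θ r, ∀ t : ℝ, x₀ + (ρ * Real.cos t, ρ * Real.sin t) ∈ U := by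
    intro ρ hρ t
    apply hA
    have hρ0 : (0:ℝ) ≤ ρ := le_trans hθ.le hρ.1
    have h1 : (x₀ + (ρ * Real.cos t, ρ * Real.sin t)).1 - x₀.1 = ρ * Real.cos t := by
      simp
    have h2 : (x₀ + (ρ * Real.cos t, ρ * Real.sin t)).2 - x₀.2 = ρ * Real.sin t := by
      simp
    have hsq : Real.sqrt (((x₀ + (ρ * Real.cos t, ρ * Real.sin t)).1 - x₀.1)^2
        + ((x₀ + (ρ * Real.cos t, ρ * Real.sin t)).2 - x₀.2)^2) = ρ := by
      rw [h1, h2]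
      have heq : (ρ * Real.cos t)^2 + (ρ * Real.sin t)^2 = ρ^2 := by
        have := Real.sin_sq_add_cos_sq t; nlinarith
      rw [heq, Real.sqrt_sq hρ0]
    simp only [Set.mem_setOf_eq, hsq]
    exact ⟨hρ.1, hρ.2⟩
  fin_cases i
  · -- i = 0 : use h = D₁G, p = -D₂G
    simp only [Fin.isValue, reduceIte, pd1, div_mul_cancel₀ _ hr.ne', div_mul_cancel₀ _ hθ.ne']
    apply circle_avg_const x₀ hU (fun y => fderiv ℝ G y (1, 0))
      (fun y => -(fderiv ℝ G y (0, 1))) (hC (1, 0)) ((hC (0, 1)).neg) _ _ hθ hθr hmem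
    · intro x hx
      rw [fderiv_fun_neg]
      simp only [ContinuousLinearMap.neg_apply]
      rw [hD (1, 0) x hx (1, 0), hD (0, 1) x hx (0, 1)]
      linarith [hharm' x hx]
    · intro x hx
      rw [fderiv_fun_neg]
      simp only [ContinuousLinearMap.neg_apply, neg_neg]
      rw [hD (1, 0) x hx (0, 1), hD (0, 1) x hx (1, 0)]
      exact (hsymm x hx (1, 0) (0, 1)).symm
  · -- i = 1 : use h = D₂G, p = D₁G
    simp only [Fin.isValue, reduceIte, pd2, div_mul_cancel₀ _ hr.ne', div_mul_cancel₀ _ hθ.ne']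
    apply circle_avg_const x₀ hU (fun y => fderiv ℝ G y (0, 1))
      (fun y => fderiv ℝ G y (1, 0)) (hC (0, 1)) (hC (1, 0)) _ _ hθ hθr hmem
    · intro x hx
      rw [hD (0, 1) x hx (1, 0), hD (1, 0) x hx (0, 1)]
      exact hsymm x hx (1, 0) (0, 1)
    · intro x hx
      rw [hD (0, 1) x hx (0, 1), hD (1, 0) x hx (1, 0)]
      linarith [hharm' x hx]
end
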